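/- For every real x and every real θ, the family of complex numbers (s ∈ ℤ) ↦ i^s · J_s(x) · exp(i s θ) is absolutely summable, i.e., the sum over s ∈ ℤ of |i^s · J_s(x) · exp(i s θ)| = |J_s(x)| is finite. -/

import Mathlib

open MeasureTheory intervalIntegral

/-- Bessel function of the first kind of integer order `s`, defined by its
integral representation `J_s(x) = (1/(2π)) ∫_{-π}^{π} exp(i(x sin τ − s τ)) dτ`. -/
noncomputable def besselJ (s : ℤ) (x : ℝ) : ℂ :=
  (1 / (2 * Real.pi)) *
    ∫ τ in (-Real.pi)..Real.pi, Complex.exp (Complex.I * (x * Real.sin τ - s * τ))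

namespace BesselAux

noncomputable def g (x τ : ℝ) : ℂ := Complex.exp (Complex.I * (x * Real.sin τ))
noncomputable def g1 (x τ : ℝ) : ℂ := (Complex.I * x * Real.cos τ) * g x τ
noncomputable def g2 (x τ : ℝ) : ℂ :=
  (Complex.I * x * (-Real.sin τ) + (Complex.I * x * Real.cos τ) ^ 2) * g x τ

lemma hasDerivAt_inner (x τ : ℝ) :
    HasDerivAt (fun τ : ℝ => Complex.I * (x * Real.sin τ)) (Complex.I * x * Real.cos τ) τ := by
  have h := ((Real.hasDerivAt_sin τ).ofReal_comp.const_mul (x : ℂ)).const_mul Complex.I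
  convert h using 1
  rfl
  ring

lemma hasDerivAt_g (x τ : ℝ) : HasDerivAt (g x) (g1 x τ) τ := by
  have h := (hasDerivAt_inner x τ).cexp
  convert h using 1
  rfl
  unfold g1 g; ring

lemma hasDerivAt_g1 (x τ : ℝ) : HasDerivAt (g1 x) (g2 x τ) τ := by
  have hc : HasDerivAt (fun τ : ℝ => Complex.I * x * (Real.cos τ : ℂ))
      (Complex.I * x * ((-Real.sin τ : ℝ) : ℂ)) τ :=
    (Real.hasDerivAt_cos τ).ofReal_comp.const_mul (Complex.I * x)
  have h := hc.mul (hasDerivAt_g x τ)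
  convert h using 1
  rfl
  rfl
  unfold g2 g1 g; push_cast; ring

lemma continuous_g (x : ℝ) : Continuous (g x) := by unfold g; fun_prop
lemma continuous_g1 (x : ℝ) : Continuous (g1 x) := by unfold g1 g; fun_prop
lemma continuous_g2 (x : ℝ) : Continuous (g2 x) := by unfold g2 g; fun_prop

lemma hpi : (-Real.pi) < Real.pi := neg_lt_self Real.pi_pos

lemma twopi : ((Real.pi - -Real.pi : ℝ) : ℂ) = 2 * Real.pi := by push_cast; ring

lemma besselJ_eq (s : ℤ) (x : ℝ) : besselJ s x = fourierCoeffOn hpi (g x) s := by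
  rw [besselJ, fourierCoeffOn_eq_integral, Complex.real_smul]
  congr 1
  · rw [Complex.ofReal_div, Complex.ofReal_one, twopi]
  · refine intervalIntegral.integral_congr fun τ _ => ?_
    rw [smul_eq_mul, fourier_coe_apply]
    simp only [g]
    rw [← Complex.exp_add]
    congr 1
    rw [twopi]
    have h2 : (2 * (Real.pi : ℂ)) ≠ 0 := by
      simp [Real.pi_ne_zero]
    field_simp
    push_cast
    ring

lemma coeff_step (x : ℝ) {f f' : ℝ → ℂ} (hf : ∀ τ, HasDerivAt f (f' τ) τ)
    (hf' : Continuous f') (hper : f Real.pi = f (-Real.pi)) {n : ℤ} (hn : n ≠ 0) :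
    fourierCoeffOn hpi f n = (1 / (Complex.I * n)) * fourierCoeffOn hpi f' n := by
  rw [fourierCoeffOn_of_hasDerivAt hpi hn (fun τ _ => hf τ)
    (hf'.intervalIntegrable _ _)]
  rw [hper, sub_self, mul_zero, zero_sub]
  have hn' : (n : ℂ) ≠ 0 := Int.cast_ne_zero.mpr hn
  have h2 : (Real.pi : ℂ) ≠ 0 := by simp [Real.pi_ne_zero]
  push_cast
  field_simp
  ring

lemma abs_g (x τ : ℝ) : ‖g x τ‖ = 1 := by
  simp [g, Complex.norm_exp]

lemma norm_coeff_g2_le (x : ℝ) (n : ℤ) :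
    ‖fourierCoeffOn hpi (g2 x) n‖ ≤ |x| + x ^ 2 := by
  rw [fourierCoeffOn_eq_integral, norm_smul]
  have hL : |Real.pi - -Real.pi| = 2 * Real.pi := by
    rw [abs_of_pos (by linarith [Real.pi_pos])]; ring
  have hb : ‖∫ τ in (-Real.pi)..Real.pi,
      fourier (-n) (τ : AddCircle (Real.pi - -Real.pi)) • g2 x τ‖ ≤
      (|x| + x ^ 2) * |Real.pi - -Real.pi| := by
    refine intervalIntegral.norm_integral_le_of_norm_le_const fun τ _ => ?_
    rw [norm_smul]
    have h1 : ‖fourier (-n) (τ : AddCircle (Real.pi - -Real.pi))‖ = 1 := by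
      rw [fourier_apply, Circle.norm_coe]
    rw [h1, one_mul]
    have h2 : ‖g2 x τ‖ = ‖(Complex.I * x * ((-Real.sin τ : ℝ) : ℂ)
        + (Complex.I * x * (Real.cos τ : ℂ)) ^ 2 : ℂ)‖ := by
      unfold g2
      rw [norm_mul, abs_g, mul_one]
      push_cast
      ring_nf
    rw [h2]
    calc ‖(Complex.I * x * ((-Real.sin τ : ℝ) : ℂ)
        + (Complex.I * x * (Real.cos τ : ℂ)) ^ 2 : ℂ)‖
        ≤ ‖(Complex.I * x * ((-Real.sin τ : ℝ) : ℂ) : ℂ)‖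
          + ‖((Complex.I * x * (Real.cos τ : ℂ)) ^ 2 : ℂ)‖ := norm_add_le _ _
      _ = |x| * |Real.sin τ| + (|x| * |Real.cos τ|) ^ 2 := by
          simp [norm_mul, norm_pow, Complex.norm_real, Real.norm_eq_abs, abs_neg,
            -Complex.ofReal_sin, -Complex.ofReal_cos, -Complex.ofReal_neg]
      _ ≤ |x| + x ^ 2 := by
          have hs := Real.abs_sin_le_one τ
          have hc := Real.abs_cos_le_one τ
          have h0 := abs_nonneg x
          have hx2 : |x| ^ 2 = x ^ 2 := sq_abs x
          have h3 : |x| * |Real.sin τ| ≤ |x| := mul_le_of_le_one_right h0 hs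
          have h4 : (|x| * |Real.cos τ|) ^ 2 ≤ |x| ^ 2 :=
            pow_le_pow_left₀ (by positivity) (mul_le_of_le_one_right h0 hc) 2
          linarith
  calc ‖(1 / (Real.pi - -Real.pi) : ℝ)‖ * ‖∫ τ in (-Real.pi)..Real.pi,
        fourier (-n) (τ : AddCircle (Real.pi - -Real.pi)) • g2 x τ‖
      ≤ ‖(1 / (Real.pi - -Real.pi) : ℝ)‖ * ((|x| + x ^ 2) * |Real.pi - -Real.pi|) := by
        gcongr
      _ = |x| + x ^ 2 := by
        rw [Real.norm_eq_abs, abs_div, abs_one, hL]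
        field_simp

lemma norm_besselJ_le (x : ℝ) {n : ℤ} (hn : n ≠ 0) :
    ‖besselJ n x‖ ≤ (|x| + x ^ 2) * (1 / (n : ℝ) ^ 2) := by
  have hper : g x Real.pi = g x (-Real.pi) := by simp [g]
  have hper1 : g1 x Real.pi = g1 x (-Real.pi) := by simp [g1, g]
  rw [besselJ_eq, coeff_step x (hasDerivAt_g x) (continuous_g1 x) hper hn,
    coeff_step x (hasDerivAt_g1 x) (continuous_g2 x) hper1 hn]
  have hIn : ‖(1 / (Complex.I * n) : ℂ)‖ = 1 / |(n : ℝ)| := by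
    rw [norm_div, norm_one, norm_mul, Complex.norm_I, one_mul]
    norm_num
  rw [norm_mul, norm_mul, hIn]
  have hC := norm_coeff_g2_le x n
  have hn0 : (0:ℝ) < |(n:ℝ)| := by
    simp only [abs_pos]
    exact_mod_cast hn
  have key : 1 / |(n:ℝ)| * (1 / |(n:ℝ)| * ‖fourierCoeffOn hpi (g2 x) n‖)
      = ‖fourierCoeffOn hpi (g2 x) n‖ * (1 / (n:ℝ) ^ 2) := by
    have h2 : (1:ℝ)/|(n:ℝ)| * (1/|(n:ℝ)|) = 1/(n:ℝ)^2 := by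
      rw [div_mul_div_comm, one_mul, ← sq, sq_abs]
    rw [← mul_assoc, h2, mul_comm]
  rw [key]
  exact mul_le_mul_of_nonneg_right hC (by positivity)

end BesselAux

theorem stmt_5 (x θ : ℝ) :
    Summable (fun s : ℤ =>
      ‖Complex.I ^ s * besselJ s x * Complex.exp (Complex.I * s * θ)‖) := by
  have habs : ∀ s : ℤ,
      ‖Complex.I ^ s * besselJ s x * Complex.exp (Complex.I * s * θ)‖
        = ‖besselJ s x‖ := by
    intro s
    rw [norm_mul, norm_mul, norm_zpow, Complex.norm_I, one_zpow, one_mul, Complex.norm_exp]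
    simp
  simp only [habs]
  have hg : Summable (fun s : ℤ => (|x| + x ^ 2) * (1 / (s : ℝ) ^ 2)) :=
    ((Real.summable_one_div_int_pow.mpr (by norm_num : 1 < 2)).mul_left _)
  refine Summable.of_norm_bounded_eventually hg ?_
  rw [Filter.eventually_cofinite]
  refine Set.Finite.subset (Set.finite_singleton 0) fun s hs => ?_
  simp only [Set.mem_setOf_eq, not_le] at hs
  simp only [Set.mem_singleton_iff]
  by_contra hs0
  have := BesselAux.norm_besselJ_le x (n := s) hs0
  rw [norm_norm] at hs
  linarith
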